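/- Let φ be a structural set in ℝ_{0,m} and let a_k ∈ ℝ_{0,m}^{(k)} be a k-grade multivector. Then Ψⱼ^{φ,φ}(a_k) = (-1)^{j(k+1)} Σᵢ binom(m-k, j-i) binom(k, i) (-1)ⁱ a_k, where the sum runs over max{0, j+k-m} ≤ i ≤ min{j, k}. -/

import Mathlib

open CliffordAlgebra

noncomputable section

/-- The quadratic form of `ℝ_{0,m}`: negative definite on `ℝ^m`. -/
abbrev Qf (m : ℕ) : QuadraticForm ℝ (Fin m → ℝ) :=
  QuadraticMap.weightedSumSquares ℝ (fun _ : Fin m => (-1 : ℝ))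

/-- The real Clifford algebra `ℝ_{0,m}`. -/
abbrev Cl (m : ℕ) := CliffordAlgebra (Qf m)

/-- A structural set: an orthonormal basis `ψ¹,…,ψᵐ` of `ℝᵐ`. -/
def IsStructuralSet {m : ℕ} (ψ : Fin m → (Fin m → ℝ)) : Prop :=
  ∀ i j, (∑ t, ψ i t * ψ j t) = if i = j then (1 : ℝ) else 0

/-- The ordered product `ψ_A = ψ^{j₁} ⋯ ψ^{j_k}` for `A = {j₁ < ⋯ < j_k}`. -/
def prodS {m : ℕ} (ψ : Fin m → (Fin m → ℝ)) (A : Finset (Fin m)) : Cl m :=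
  ((A.sort (· ≤ ·)).map (fun i => ι (Qf m) (ψ i))).prod

/-- The operator `Ψ_k^{φ,ψ}(a) = Σ_{|A|=k} φ_A a ψ̂_A`. -/
def PsiK {m : ℕ} (φ ψ : Fin m → (Fin m → ℝ)) (k : ℕ) (a : Cl m) : Cl m :=
  ∑ A ∈ Finset.univ.filter (fun A : Finset (Fin m) => A.card = k),
    prodS φ A * a * reverse (prodS ψ A)

/-- `Ψ₊ = Σ_{k even} Ψ_k`. -/
def PsiPlus {m : ℕ} (φ ψ : Fin m → (Fin m → ℝ)) (a : Cl m) : Cl m :=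
  ∑ k ∈ (Finset.range (m + 1)).filter (fun k => Even k), PsiK φ ψ k a

/-- `Ψ₋ = Σ_{k odd} Ψ_k`. -/
def PsiMinus {m : ℕ} (φ ψ : Fin m → (Fin m → ℝ)) (a : Cl m) : Cl m :=
  ∑ k ∈ (Finset.range (m + 1)).filter (fun k => Odd k), PsiK φ ψ k a

/-- `Ψ₁^{φ,ψ}(a) = Σⱼ φʲ a ψʲ`. -/
def Psi1 {m : ℕ} (φ ψ : Fin m → (Fin m → ℝ)) (a : Cl m) : Cl m :=
  ∑ j, ι (Qf m) (φ j) * a * ι (Qf m) (ψ j)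

/-- The standard basis of `ℝᵐ`. -/
def stdB {m : ℕ} (i : Fin m) : Fin m → ℝ := Pi.single i 1

/-- The basis multivector `e_A`. -/
def eA {m : ℕ} (A : Finset (Fin m)) : Cl m := prodS stdB A

/-- The element with coefficients `c` in the multivector basis. -/
def toCl {m : ℕ} (c : Finset (Fin m) → ℝ) : Cl m := ∑ A, c A • eA A

/-- The space `ℝ_{0,m}^{(k)}` of `k`-grade multivectors. -/
def gradeK (m k : ℕ) : Submodule ℝ (Cl m) :=
  Submodule.span ℝ {x | ∃ A : Finset (Fin m), A.card = k ∧ x = eA A}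

/-- Coefficient functions of `ℝ_{0,m}`-valued maps. -/
abbrev Coef (m : ℕ) := Finset (Fin m) → ℝ

/-- The coefficients of the even part `f₊`. -/
def cEven {m : ℕ} (c : Coef m) : Coef m := fun A => if Even A.card then c A else 0

/-- The coefficients of the odd part `f₋`. -/
def cOdd {m : ℕ} (c : Coef m) : Coef m := fun A => if Odd A.card then c A else 0

/-- The even part of a Clifford number. -/
def evenPart {m : ℕ} (a : Cl m) : Cl m :=
  (DirectSum.decompose (evenOdd (Qf m)) a 0 : evenOdd (Qf m) 0)

/-- The odd part of a Clifford number. -/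
def oddPart {m : ℕ} (a : Cl m) : Cl m :=
  (DirectSum.decompose (evenOdd (Qf m)) a 1 : evenOdd (Qf m) 1)

/-- Partial derivative `∂F/∂xᵢ` of a coefficient function. -/
def pd {m : ℕ} (i : Fin m) (F : (Fin m → ℝ) → Coef m) : (Fin m → ℝ) → Coef m :=
  fun x => fderiv ℝ F x (Pi.single i 1)

/-- The sandwich operator `φ∂[f]ψ∂ = Σᵢⱼ φⁱ (∂²f/∂xᵢ∂xⱼ) ψʲ` for `f = Σ_A F_A e_A`. -/
def sandwichD {m : ℕ} (φ ψ : Fin m → (Fin m → ℝ)) (F : (Fin m → ℝ) → Coef m)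
    (x : Fin m → ℝ) : Cl m :=
  ∑ i, ∑ j, ι (Qf m) (φ i) * toCl (pd i (pd j F) x) * ι (Qf m) (ψ j)

/-- The operator `φ∂[ψ∂[f]] = Σᵢⱼ φⁱ ψʲ ∂²f/∂xᵢ∂xⱼ`. -/
def ddD {m : ℕ} (φ ψ : Fin m → (Fin m → ℝ)) (F : (Fin m → ℝ) → Coef m)
    (x : Fin m → ℝ) : Cl m :=
  ∑ i, ∑ j, ι (Qf m) (φ i) * (ι (Qf m) (ψ j) * toCl (pd i (pd j F) x))

/-- The componentwise Laplacian `Δf = Σᵢ ∂²f/∂xᵢ²`. -/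
def lapD {m : ℕ} (F : (Fin m → ℝ) → Coef m) (x : Fin m → ℝ) : Cl m :=
  ∑ i, toCl (pd i (pd i F) x)

section Aux
variable {m : ℕ}

lemma Qf_apply (v : Fin m → ℝ) : Qf m v = -∑ t, v t * v t := by
  rw [QuadraticMap.weightedSumSquares_apply]
  simp [neg_smul, Finset.sum_neg_distrib]

lemma polar_Qf (v w : Fin m → ℝ) :
    QuadraticMap.polar (⇑(Qf m)) v w = -(2 * ∑ t, v t * w t) := by
  have h : ∑ t, (v + w) t * (v + w) t
      = ∑ t, v t * v t + ∑ t, w t * w t + 2 * ∑ t, v t * w t := by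
    rw [Finset.mul_sum, ← Finset.sum_add_distrib, ← Finset.sum_add_distrib]
    exact Finset.sum_congr rfl fun t _ => by simp only [Pi.add_apply]; ring
  simp only [QuadraticMap.polar, Qf_apply, h]
  ring

variable (φ : Fin m → (Fin m → ℝ))

lemma iota_sq (hφ : IsStructuralSet φ) (i : Fin m) :
    ι (Qf m) (φ i) * ι (Qf m) (φ i) = -1 := by
  rw [CliffordAlgebra.ι_sq_scalar, Qf_apply, hφ i i]
  simp

lemma iota_anticomm (hφ : IsStructuralSet φ) {i j : Fin m} (h : i ≠ j) :
    ι (Qf m) (φ i) * ι (Qf m) (φ j) = -(ι (Qf m) (φ j) * ι (Qf m) (φ i)) := by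
  have h2 := CliffordAlgebra.ι_mul_ι_add_swap (Q := Qf m) (φ i) (φ j)
  rw [polar_Qf, hφ i j, if_neg h] at h2
  simp only [mul_zero, neg_zero, map_zero] at h2
  exact eq_neg_of_add_eq_zero_left h2

end Aux

section Aux2
variable {m : ℕ}

/-- Product of `ι (φ i)` over a list of indices. -/
def pl (φ : Fin m → (Fin m → ℝ)) (l : List (Fin m)) : Cl m :=
  (l.map (fun i => ι (Qf m) (φ i))).prod

@[simp] lemma pl_nil (φ : Fin m → (Fin m → ℝ)) : pl φ [] = 1 := rfl

@[simp] lemma pl_cons (φ : Fin m → (Fin m → ℝ)) (i : Fin m) (l : List (Fin m)) :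
    pl φ (i :: l) = ι (Qf m) (φ i) * pl φ l := by
  simp [pl]

lemma prodS_eq_pl (φ : Fin m → (Fin m → ℝ)) (A : Finset (Fin m)) :
    prodS φ A = pl φ (A.sort (· ≤ ·)) := rfl

variable {φ : Fin m → (Fin m → ℝ)}

lemma pl_perm (hφ : IsStructuralSet φ) {l₁ l₂ : List (Fin m)} (h : l₁.Perm l₂)
    (hn : l₁.Nodup) : ∃ ε : ℝ, ε * ε = 1 ∧ pl φ l₁ = ε • pl φ l₂ := by
  induction h with
  | nil => exact ⟨1, by norm_num, by simp⟩
  | cons x h ih =>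
    obtain ⟨ε, hε, he⟩ := ih (List.Nodup.of_cons hn)
    exact ⟨ε, hε, by simp [he, mul_smul_comm]⟩
  | swap x y l =>
    refine ⟨-1, by norm_num, ?_⟩
    have hxy : y ≠ x := by simp [List.nodup_cons] at hn; tauto
    simp only [pl_cons, ← mul_assoc, iota_anticomm φ hφ hxy]
    simp
  | trans h₁ h₂ ih₁ ih₂ =>
    obtain ⟨ε₁, hε₁, he₁⟩ := ih₁ hn
    obtain ⟨ε₂, hε₂, he₂⟩ := ih₂ (h₁.nodup hn)
    refine ⟨ε₁ * ε₂, ?_, by rw [he₁, he₂, smul_smul]⟩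
    rw [mul_mul_mul_comm, hε₁, hε₂, one_mul]

lemma pl_move (hφ : IsStructuralSet φ) {i : Fin m} {l : List (Fin m)} (h : i ∉ l) :
    pl φ l * ι (Qf m) (φ i) = ((-1 : ℝ) ^ l.length) • (ι (Qf m) (φ i) * pl φ l) := by
  induction l with
  | nil => simp
  | cons a l ih =>
    have hai : a ≠ i := fun hh => h (by simp [hh])
    have hil : i ∉ l := fun hh => h (by simp [hh])
    rw [pl_cons, mul_assoc, ih hil, mul_smul_comm, ← mul_assoc,
      iota_anticomm φ hφ hai]
    simp only [List.length_cons, pow_succ, neg_mul, neg_smul, smul_smul]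
    rw [mul_assoc]
    simp [mul_comm]

/-- `ε`-version of multiplying `prodS` by an extra vector not in the set. -/
lemma prodS_insert (hφ : IsStructuralSet φ) {i : Fin m} {A : Finset (Fin m)}
    (h : i ∉ A) : ∃ ε : ℝ, ε * ε = 1 ∧
      prodS φ (insert i A) = ε • (ι (Qf m) (φ i) * prodS φ A) := by
  have hperm : ((insert i A).sort (· ≤ ·)).Perm (i :: A.sort (· ≤ ·)) := by
    refine (Finset.sort_perm_toList _ _).trans ?_
    refine (Finset.toList_insert h).trans ?_
    exact List.Perm.cons i (Finset.sort_perm_toList _ _).symm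
  obtain ⟨ε, hε, he⟩ := pl_perm hφ hperm (Finset.sort_nodup _ _)
  exact ⟨ε, hε, by rw [prodS_eq_pl, he, pl_cons, ← prodS_eq_pl]⟩

end Aux2

section Aux3
variable {m : ℕ} {φ : Fin m → (Fin m → ℝ)}

lemma eps_flip {ε : ℝ} (hε : ε * ε = 1) {x y : Cl m} (h : x = ε • y) :
    y = ε • x := by
  rw [h, smul_smul, hε, one_smul]

/-- Conjugating the `A`-sandwich by an extra vector `φ i`, `i ∉ A`. -/
lemma conj_insert (hφ : IsStructuralSet φ) {i : Fin m} {A : Finset (Fin m)}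
    (h : i ∉ A) (a : Cl m) :
    prodS φ (insert i A) * a * reverse (prodS φ (insert i A)) =
      ι (Qf m) (φ i) * (prodS φ A * a * reverse (prodS φ A)) * ι (Qf m) (φ i) := by
  obtain ⟨ε, hε, he⟩ := prodS_insert hφ h
  rw [he]
  rw [smul_mul_assoc, smul_mul_assoc, map_smul, mul_smul_comm, smul_smul, hε,
    one_smul, reverse.map_mul, CliffordAlgebra.reverse_ι]
  noncomm_ring

/-- Conjugating the `A`-sandwich by `φ i`, `i ∈ A`, erases `i`. -/
lemma conj_erase (hφ : IsStructuralSet φ) {i : Fin m} {A : Finset (Fin m)}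
    (h : i ∈ A) (a : Cl m) :
    ι (Qf m) (φ i) * (prodS φ A * a * reverse (prodS φ A)) * ι (Qf m) (φ i) =
      prodS φ (A.erase i) * a * reverse (prodS φ (A.erase i)) := by
  obtain ⟨ε, hε, he⟩ := prodS_insert hφ (Finset.notMem_erase i A)
  rw [Finset.insert_erase h] at he
  have hv : ι (Qf m) (φ i) * prodS φ A = (-ε) • prodS φ (A.erase i) := by
    rw [he, mul_smul_comm, ← mul_assoc, iota_sq φ hφ, neg_one_mul, neg_smul, smul_neg]
  have hr : reverse (prodS φ A) * ι (Qf m) (φ i) = (-ε) • reverse (prodS φ (A.erase i)) := by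
    rw [← CliffordAlgebra.reverse_ι (Q := Qf m) (φ i), ← reverse.map_mul, hv, map_smul]
  calc ι (Qf m) (φ i) * (prodS φ A * a * reverse (prodS φ A)) * ι (Qf m) (φ i)
      = (ι (Qf m) (φ i) * prodS φ A) * a * (reverse (prodS φ A) * ι (Qf m) (φ i)) := by
        noncomm_ring
    _ = ((-ε) * (-ε)) • (prodS φ (A.erase i) * a * reverse (prodS φ (A.erase i))) := by
        rw [hv, hr]
        rw [smul_mul_assoc, smul_mul_assoc, mul_smul_comm, smul_smul]
    _ = _ := by rw [neg_mul_neg, hε, one_smul]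

end Aux3

section Aux4
variable {m : ℕ} {φ : Fin m → (Fin m → ℝ)}

/-- The recurrence `Σᵢ φⁱ Ψ_{n+1}(a) φⁱ = (n+2) Ψ_{n+2}(a) + (m-n) Ψ_n(a)`. -/
lemma psiK_rec (hφ : IsStructuralSet φ) (a : Cl m) (n : ℕ) :
    (∑ i, ι (Qf m) (φ i) * PsiK φ φ (n+1) a * ι (Qf m) (φ i))
      = (n+2) • PsiK φ φ (n+2) a + (m - n) • PsiK φ φ n a := by
  classical
  set T : Finset (Fin m) → Cl m :=
    fun A => prodS φ A * a * reverse (prodS φ A) with hT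
  have hmemF : ∀ (r : ℕ) (A : Finset (Fin m)),
      A ∈ Finset.univ.filter (fun A : Finset (Fin m) => A.card = r) ↔ A.card = r := by
    intro r A; simp
  have step1 : (∑ i, ι (Qf m) (φ i) * PsiK φ φ (n+1) a * ι (Qf m) (φ i))
      = ∑ A ∈ Finset.univ.filter (fun A : Finset (Fin m) => A.card = n+1),
          ∑ i, ι (Qf m) (φ i) * T A * ι (Qf m) (φ i) := by
    rw [Finset.sum_comm]
    apply Finset.sum_congr rfl
    intro i _
    rw [PsiK, Finset.mul_sum, Finset.sum_mul]
  rw [step1]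
  have step2 : ∀ A ∈ Finset.univ.filter (fun A : Finset (Fin m) => A.card = n+1),
      (∑ i, ι (Qf m) (φ i) * T A * ι (Qf m) (φ i))
        = (∑ i ∈ Finset.univ.filter (· ∈ A), T (A.erase i))
          + ∑ i ∈ Finset.univ.filter (· ∉ A), T (insert i A) := by
    intro A _
    rw [← Finset.sum_filter_add_sum_filter_not Finset.univ (· ∈ A)]
    congr 1
    · apply Finset.sum_congr rfl
      intro i hi
      rw [Finset.mem_filter] at hi
      exact conj_erase hφ hi.2 a
    · apply Finset.sum_congr rfl
      intro i hi
      rw [Finset.mem_filter] at hi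
      exact (conj_insert hφ hi.2 a).symm
  rw [Finset.sum_congr rfl step2, Finset.sum_add_distrib]
  have claim2 : (∑ A ∈ Finset.univ.filter (fun A : Finset (Fin m) => A.card = n+1),
      ∑ i ∈ Finset.univ.filter (· ∈ A), T (A.erase i)) = (m - n) • PsiK φ φ n a := by
    rw [Finset.sum_sigma']
    rw [Finset.sum_nbij' (i := fun p => (⟨p.fst.erase p.snd, p.snd⟩ :
          (_ : Finset (Fin m)) × Fin m))
        (j := fun p => ⟨insert p.snd p.fst, p.snd⟩)
        (t := (Finset.univ.filter (fun A : Finset (Fin m) => A.card = n)).sigma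
          (fun D => Finset.univ.filter (· ∉ D)))
        (g := fun p => T p.fst)]
    · rw [Finset.sum_sigma]
      rw [PsiK, Finset.smul_sum]
      apply Finset.sum_congr rfl
      intro D hD
      dsimp only
      rw [Finset.sum_const]
      congr 1
      have : Finset.univ.filter (· ∉ D) = Dᶜ := by ext x; simp
      rw [this, Finset.card_compl, (hmemF _ _).mp hD]
      simp
    · rintro ⟨A, i⟩ hp
      simp only [Finset.mem_sigma, Finset.mem_filter, Finset.mem_univ, true_and] at hp ⊢
      exact ⟨by rw [Finset.card_erase_of_mem hp.2, hp.1]; rfl, Finset.notMem_erase i A⟩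
    · rintro ⟨D, i⟩ hp
      simp only [Finset.mem_sigma, Finset.mem_filter, Finset.mem_univ, true_and] at hp ⊢
      exact ⟨by rw [Finset.card_insert_of_notMem hp.2, hp.1], Finset.mem_insert_self i D⟩
    · rintro ⟨A, i⟩ hp
      simp only [Finset.mem_sigma, Finset.mem_filter, Finset.mem_univ, true_and] at hp
      simp [Finset.insert_erase hp.2]
    · rintro ⟨D, i⟩ hp
      simp only [Finset.mem_sigma, Finset.mem_filter, Finset.mem_univ, true_and] at hp
      simp [Finset.erase_insert hp.2]
    · rintro ⟨A, i⟩ _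
      rfl
  have claim1 : (∑ A ∈ Finset.univ.filter (fun A : Finset (Fin m) => A.card = n+1),
      ∑ i ∈ Finset.univ.filter (· ∉ A), T (insert i A)) = (n+2) • PsiK φ φ (n+2) a := by
    rw [Finset.sum_sigma']
    rw [Finset.sum_nbij' (i := fun p => (⟨insert p.snd p.fst, p.snd⟩ :
          (_ : Finset (Fin m)) × Fin m))
        (j := fun p => ⟨p.fst.erase p.snd, p.snd⟩)
        (t := (Finset.univ.filter (fun C : Finset (Fin m) => C.card = n+2)).sigma
          (fun C => Finset.univ.filter (· ∈ C)))
        (g := fun p => T p.fst)]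
    · rw [Finset.sum_sigma]
      rw [PsiK, Finset.smul_sum]
      apply Finset.sum_congr rfl
      intro C hC
      dsimp only
      rw [Finset.sum_const]
      congr 1
      have : Finset.univ.filter (· ∈ C) = C := by ext x; simp
      rw [this, (hmemF _ _).mp hC]
    · rintro ⟨A, i⟩ hp
      simp only [Finset.mem_sigma, Finset.mem_filter, Finset.mem_univ, true_and] at hp ⊢
      exact ⟨by rw [Finset.card_insert_of_notMem hp.2, hp.1], Finset.mem_insert_self i A⟩
    · rintro ⟨C, i⟩ hp
      simp only [Finset.mem_sigma, Finset.mem_filter, Finset.mem_univ, true_and] at hp ⊢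
      exact ⟨by rw [Finset.card_erase_of_mem hp.2, hp.1]; rfl, Finset.notMem_erase i C⟩
    · rintro ⟨A, i⟩ hp
      simp only [Finset.mem_sigma, Finset.mem_filter, Finset.mem_univ, true_and] at hp
      simp [Finset.erase_insert hp.2]
    · rintro ⟨C, i⟩ hp
      simp only [Finset.mem_sigma, Finset.mem_filter, Finset.mem_univ, true_and] at hp
      simp [Finset.insert_erase hp.2]
    · rintro ⟨A, i⟩ _
      rfl
  rw [claim1, claim2, add_comm]

end Aux4

section Aux5
variable {m : ℕ}

lemma stdB_structural : IsStructuralSet (stdB : Fin m → (Fin m → ℝ)) := by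
  intro i j
  rcases eq_or_ne i j with rfl | h
  · simp [stdB, Pi.single_apply]
  · rw [if_neg h]
    apply Finset.sum_eq_zero
    intro t _
    simp only [stdB, Pi.single_apply, ite_mul, one_mul, zero_mul]
    split_ifs <;> simp_all

lemma column_orthonormal {φ : Fin m → (Fin m → ℝ)} (hφ : IsStructuralSet φ)
    (t s : Fin m) : (∑ i, φ i t * φ i s) = if t = s then (1:ℝ) else 0 := by
  classical
  set M : Matrix (Fin m) (Fin m) ℝ := Matrix.of φ with hM
  have h1 : M * M.transpose = 1 := by
    ext i j
    rw [Matrix.mul_apply]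
    simpa [hM, Matrix.one_apply] using hφ i j
  have h2 : M.transpose * M = 1 := mul_eq_one_comm.mp h1
  have := Matrix.ext_iff.mpr h2 t s
  rw [Matrix.mul_apply] at this
  simpa [hM, Matrix.one_apply] using this

lemma vec_expand (v : Fin m → ℝ) : v = ∑ t, v t • (stdB t : Fin m → ℝ) := by
  funext s
  rw [Finset.sum_apply]
  simp [stdB, Pi.single_apply]

/-- Basis independence of `Ψ₁`. -/
lemma psi1_invariant {φ : Fin m → (Fin m → ℝ)} (hφ : IsStructuralSet φ) (a : Cl m) :
    ∑ i, ι (Qf m) (φ i) * a * ι (Qf m) (φ i)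
      = ∑ t, ι (Qf m) (stdB t) * a * ι (Qf m) (stdB t) := by
  have hexp : ∀ i, ι (Qf m) (φ i) = ∑ t, φ i t • ι (Qf m) (stdB t) := by
    intro i
    conv_lhs => rw [vec_expand (φ i)]
    rw [map_sum]
    exact Finset.sum_congr rfl fun t _ => by rw [map_smul]
  calc ∑ i, ι (Qf m) (φ i) * a * ι (Qf m) (φ i)
      = ∑ i, ∑ t, ∑ s, (φ i t * φ i s) •
          (ι (Qf m) (stdB t) * a * ι (Qf m) (stdB s)) := by
        apply Finset.sum_congr rfl
        intro i _
        rw [hexp i, Finset.sum_mul, Finset.sum_mul]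
        apply Finset.sum_congr rfl
        intro t _
        rw [Finset.mul_sum]
        apply Finset.sum_congr rfl
        intro s _
        rw [smul_mul_assoc, smul_mul_assoc, mul_smul_comm, smul_smul]
    _ = ∑ t, ∑ s, (∑ i, φ i t * φ i s) •
          (ι (Qf m) (stdB t) * a * ι (Qf m) (stdB s)) := by
        rw [Finset.sum_comm]
        apply Finset.sum_congr rfl
        intro t _
        rw [Finset.sum_comm]
        apply Finset.sum_congr rfl
        intro s _
        rw [Finset.sum_smul]
    _ = ∑ t, ι (Qf m) (stdB t) * a * ι (Qf m) (stdB t) := by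
        apply Finset.sum_congr rfl
        intro t _
        rw [Finset.sum_eq_single t]
        · rw [column_orthonormal hφ, if_pos rfl, one_smul]
        · intro s _ hs
          rw [column_orthonormal hφ, if_neg (Ne.symm hs), zero_smul]
        · intro h; exact absurd (Finset.mem_univ t) h

@[simp] lemma prodS_empty (φ : Fin m → (Fin m → ℝ)) : prodS φ ∅ = 1 := by simp [prodS]

lemma psiK_zero (φ ψ : Fin m → (Fin m → ℝ)) (a : Cl m) : PsiK φ ψ 0 a = a := by
  have : Finset.univ.filter (fun A : Finset (Fin m) => A.card = 0) = {∅} := by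
    ext A; simp [Finset.card_eq_zero]
  rw [PsiK, this, Finset.sum_singleton]
  simp

lemma psiK_one (φ ψ : Fin m → (Fin m → ℝ)) (a : Cl m) :
    PsiK φ ψ 1 a = ∑ i, ι (Qf m) (φ i) * a * ι (Qf m) (ψ i) := by
  rw [PsiK]
  refine (Finset.sum_nbij (i := fun i : Fin m => ({i} : Finset (Fin m))) ?_ ?_ ?_ ?_).symm
  · intro i _; simp
  · intro a _ b _ h; exact Finset.singleton_injective h
  · intro A hA
    simp only [Finset.coe_filter, Set.mem_setOf_eq, Finset.mem_univ, true_and] at hA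
    obtain ⟨i, rfl⟩ := Finset.card_eq_one.mp hA
    exact ⟨i, Finset.mem_coe.mpr (Finset.mem_univ i), rfl⟩
  · intro i _
    simp [prodS, Finset.sort_singleton]

end Aux5

section Aux6
variable {m : ℕ}

lemma psiK_eq_std {φ : Fin m → (Fin m → ℝ)} (hφ : IsStructuralSet φ) (a : Cl m)
    (n : ℕ) : PsiK φ φ n a = PsiK stdB stdB n a := by
  induction n using Nat.strong_induction_on with
  | _ n ih =>
    match n with
    | 0 => rw [psiK_zero, psiK_zero]
    | 1 => rw [psiK_one, psiK_one, psi1_invariant hφ]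
    | (n+2) =>
      have h1 := psiK_rec hφ a n
      have h2 := psiK_rec stdB_structural a n
      have h3 : PsiK φ φ (n+1) a = PsiK stdB stdB (n+1) a := ih (n+1) (by omega)
      have h4 : PsiK φ φ n a = PsiK stdB stdB n a := ih n (by omega)
      have h5 : (∑ i, ι (Qf m) (φ i) * PsiK φ φ (n+1) a * ι (Qf m) (φ i))
          = ∑ i, ι (Qf m) (stdB i) * PsiK stdB stdB (n+1) a * ι (Qf m) (stdB i) := by
        rw [h3]; exact psi1_invariant hφ _
      rw [h1, h2, h4] at h5
      have h6 : ((n+2 : ℕ) : ℝ) • PsiK φ φ (n+2) a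
          = ((n+2 : ℕ) : ℝ) • PsiK stdB stdB (n+2) a := by
        rw [Nat.cast_smul_eq_nsmul, Nat.cast_smul_eq_nsmul]
        exact add_right_cancel h5
      exact smul_right_injective (Cl m) (by positivity) h6

lemma e_conj (i : Fin m) (B : Finset (Fin m)) :
    ι (Qf m) (stdB i) * eA B * ι (Qf m) (stdB i)
      = (if i ∈ B then (-1:ℝ)^B.card else (-1:ℝ)^(B.card+1)) • eA B := by
  have hvv : ι (Qf m) (stdB i) * ι (Qf m) (stdB i) = -1 :=
    iota_sq stdB stdB_structural i
  by_cases h : i ∈ B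
  · rw [if_pos h]
    obtain ⟨ε, hε, he⟩ := prodS_insert (φ := stdB) stdB_structural
      (Finset.notMem_erase i B)
    rw [Finset.insert_erase h] at he
    have hmove : prodS stdB (B.erase i) * ι (Qf m) (stdB i)
        = ((-1:ℝ)^(B.erase i).card) •
          (ι (Qf m) (stdB i) * prodS stdB (B.erase i)) := by
      have hnot : i ∉ (B.erase i).sort (· ≤ ·) := by simp [Finset.mem_sort]
      have h2 := pl_move (φ := stdB) stdB_structural hnot
      rwa [← prodS_eq_pl, Finset.length_sort] at h2
    have hflip : ι (Qf m) (stdB i) * prodS stdB (B.erase i) = ε • prodS stdB B :=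
      eps_flip hε he
    have hk : B.card = (B.erase i).card + 1 := by
      rw [Finset.card_erase_of_mem h]
      have : 1 ≤ B.card := Finset.card_pos.mpr ⟨i, h⟩
      omega
    have key : ι (Qf m) (stdB i) * (ι (Qf m) (stdB i) * prodS stdB (B.erase i))
          * ι (Qf m) (stdB i)
        = ((-1:ℝ)^B.card * ε) • prodS stdB B := by
      rw [← mul_assoc, hvv, neg_one_mul, neg_mul, hmove, hflip, smul_smul,
        ← neg_smul, hk, pow_succ]
      congr 1
      ring
    rw [eA]
    conv_lhs => rw [he, mul_smul_comm, smul_mul_assoc, key, smul_smul]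
    congr 1
    calc ε * ((-1:ℝ)^B.card * ε) = (-1:ℝ)^B.card * (ε*ε) := by ring
    _ = (-1:ℝ)^B.card := by rw [hε, mul_one]
  · rw [if_neg h, eA]
    have hmove : prodS stdB B * ι (Qf m) (stdB i)
        = ((-1:ℝ)^B.card) • (ι (Qf m) (stdB i) * prodS stdB B) := by
      have hnot : i ∉ B.sort (· ≤ ·) := by simp [Finset.mem_sort, h]
      have h2 := pl_move (φ := stdB) stdB_structural hnot
      rwa [← prodS_eq_pl, Finset.length_sort] at h2
    rw [mul_assoc, hmove, mul_smul_comm, ← mul_assoc, hvv, neg_one_mul,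
      pow_succ, smul_neg, ← neg_smul]
    congr 1
    ring

end Aux6

section Aux7
variable {m : ℕ}

lemma pl_conj_eA (B : Finset (Fin m)) (l : List (Fin m)) :
    pl stdB l * eA B * reverse (pl stdB l)
      = ((l.map (fun i => if i ∈ B then (-1:ℝ)^B.card else (-1:ℝ)^(B.card+1))).prod)
          • eA B := by
  induction l with
  | nil => simp [pl]
  | cons i l ih =>
    rw [pl_cons, List.map_cons, List.prod_cons, reverse.map_mul,
      CliffordAlgebra.reverse_ι]
    have hassoc : ι (Qf m) (stdB i) * pl stdB l * eA B *
          (reverse (pl stdB l) * ι (Qf m) (stdB i))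
        = ι (Qf m) (stdB i) * (pl stdB l * eA B * reverse (pl stdB l)) *
          ι (Qf m) (stdB i) := by noncomm_ring
    rw [hassoc, ih, mul_smul_comm, smul_mul_assoc, e_conj, smul_smul, mul_comm]

lemma list_prod_sort (A : Finset (Fin m)) (f : Fin m → ℝ) :
    ((A.sort (· ≤ ·)).map f).prod = ∏ i ∈ A, f i := by
  rw [Finset.prod, ← Finset.sort_eq A (· ≤ ·), Multiset.map_coe, Multiset.prod_coe]

lemma prodS_conj_eA (B A : Finset (Fin m)) :
    prodS stdB A * eA B * reverse (prodS stdB A)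
      = (∏ i ∈ A, (if i ∈ B then (-1:ℝ)^B.card else (-1:ℝ)^(B.card+1))) • eA B := by
  rw [prodS_eq_pl, pl_conj_eA, list_prod_sort]

lemma psiK_std (B : Finset (Fin m)) (n : ℕ) :
    PsiK (stdB : Fin m → Fin m → ℝ) stdB n (eA B)
      = (∑ A ∈ Finset.univ.filter (fun A : Finset (Fin m) => A.card = n),
          ∏ i ∈ A, (if i ∈ B then (-1:ℝ)^B.card else (-1:ℝ)^(B.card+1))) • eA B := by
  rw [PsiK, Finset.sum_smul]
  exact Finset.sum_congr rfl fun A _ => prodS_conj_eA B A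

end Aux7

section Aux8
variable {m : ℕ}

lemma fiber_card {k : ℕ} (B : Finset (Fin m)) (hB : B.card = k) (n c : ℕ)
    (hc : c ≤ n) :
    ((Finset.univ.filter (fun A : Finset (Fin m) => A.card = n)).filter
        (fun A => (A ∩ B).card = c)).card = k.choose c * (m - k).choose (n - c) := by
  classical
  have hkey : ((Finset.univ.filter (fun A : Finset (Fin m) => A.card = n)).filter
        (fun A => (A ∩ B).card = c)).card
      = ((B.powersetCard c) ×ˢ (Bᶜ.powersetCard (n - c))).card := by
    apply Finset.card_nbij' (i := fun A => (A ∩ B, A \ B))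
      (j := fun p => p.1 ∪ p.2)
    · intro A hA
      simp only [Finset.mem_coe, Finset.mem_filter, Finset.mem_univ, true_and] at hA
      obtain ⟨hn, hcc⟩ := hA
      have hsd : (A \ B).card + (A ∩ B).card = A.card :=
        Finset.card_sdiff_add_card_inter A B
      simp only [Finset.mem_coe, Finset.mem_product, Finset.mem_powersetCard]
      refine ⟨⟨Finset.inter_subset_right, hcc⟩, ?_, by omega⟩
      intro x hx
      simp only [Finset.mem_sdiff] at hx
      simp [Finset.mem_compl, hx.2]
    · rintro ⟨S, T⟩ hp
      simp only [Finset.mem_coe, Finset.mem_product, Finset.mem_powersetCard] at hp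
      obtain ⟨⟨hSB, hSc⟩, hTB, hTc⟩ := hp
      have hTB' : ∀ x ∈ T, x ∉ B := fun x hx => by
        have := hTB hx; simpa [Finset.mem_compl] using this
      have hdisj : Disjoint S T := by
        rw [Finset.disjoint_left]
        intro x hxS hxT
        exact hTB' x hxT (hSB hxS)
      have hint : (S ∪ T) ∩ B = S := by
        ext x
        simp only [Finset.mem_inter, Finset.mem_union]
        constructor
        · rintro ⟨hx | hx, hxB⟩
          · exact hx
          · exact absurd hxB (hTB' x hx)
        · intro hx
          exact ⟨Or.inl hx, hSB hx⟩
      simp only [Finset.mem_coe, Finset.mem_filter, Finset.mem_univ, true_and]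
      constructor
      · rw [Finset.card_union_of_disjoint hdisj, hSc, hTc]
        omega
      · rw [hint, hSc]
    · intro A hA
      dsimp only
      rw [Finset.union_comm]
      exact Finset.sdiff_union_inter A B
    · rintro ⟨S, T⟩ hp
      simp only [Finset.mem_coe, Finset.mem_product, Finset.mem_powersetCard] at hp
      obtain ⟨⟨hSB, hSc⟩, hTB, hTc⟩ := hp
      have hTB' : ∀ x ∈ T, x ∉ B := fun x hx => by
        have := hTB hx; simpa [Finset.mem_compl] using this
      have hint : (S ∪ T) ∩ B = S := by
        ext x
        simp only [Finset.mem_inter, Finset.mem_union]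
        constructor
        · rintro ⟨hx | hx, hxB⟩
          · exact hx
          · exact absurd hxB (hTB' x hx)
        · intro hx
          exact ⟨Or.inl hx, hSB hx⟩
      have hsdiff : (S ∪ T) \ B = T := by
        ext x
        simp only [Finset.mem_sdiff, Finset.mem_union]
        constructor
        · rintro ⟨hx | hx, hxB⟩
          · exact absurd (hSB hx) hxB
          · exact hx
        · intro hx
          exact ⟨Or.inr hx, hTB' x hx⟩
      simp [hint, hsdiff]
  rw [hkey, Finset.card_product, Finset.card_powersetCard, Finset.card_powersetCard,
    hB, Finset.card_compl, Fintype.card_fin, hB]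

lemma scalar_eq {k : ℕ} (B : Finset (Fin m)) (hB : B.card = k) (n : ℕ) :
    (∑ A ∈ Finset.univ.filter (fun A : Finset (Fin m) => A.card = n),
        ∏ i ∈ A, (if i ∈ B then (-1:ℝ)^B.card else (-1:ℝ)^(B.card+1)))
      = (-1:ℝ)^(n*(k+1)) * ∑ i ∈ Finset.Icc (n + k - m) (min n k),
          ((m-k).choose (n-i) : ℝ) * (k.choose i : ℝ) * (-1:ℝ)^i := by
  classical
  subst hB
  set k := B.card with hk
  -- Step a : rewrite each product
  have ha : ∀ A ∈ Finset.univ.filter (fun A : Finset (Fin m) => A.card = n),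
      (∏ i ∈ A, (if i ∈ B then (-1:ℝ)^k else (-1:ℝ)^(k+1)))
        = (-1:ℝ)^(k*(A ∩ B).card) * (-1:ℝ)^((k+1)*(n-(A ∩ B).card)) := by
    intro A hA
    simp only [Finset.mem_filter, Finset.mem_univ, true_and] at hA
    rw [Finset.prod_ite (f := fun _ => (-1:ℝ)^k) (g := fun _ => (-1:ℝ)^(k+1)),
      Finset.prod_const, Finset.prod_const, ← pow_mul, ← pow_mul,
      Finset.filter_mem_eq_inter]
    have h1 : A.filter (fun i => i ∉ B) = A \ B := by
      ext x; simp [Finset.mem_sdiff]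
    have h2 : (A \ B).card + (A ∩ B).card = A.card :=
      Finset.card_sdiff_add_card_inter A B
    have h3 : (A \ B).card = n - (A ∩ B).card := by omega
    rw [h1, h3]
  rw [Finset.sum_congr rfl ha]
  -- Step b : fiberwise
  have hmaps : ∀ A ∈ Finset.univ.filter (fun A : Finset (Fin m) => A.card = n),
      (A ∩ B).card ∈ Finset.range (n+1) := by
    intro A hA
    simp only [Finset.mem_filter, Finset.mem_univ, true_and] at hA
    rw [Finset.mem_range]
    have := Finset.card_le_card (Finset.inter_subset_left (s₁ := A) (s₂ := B))
    omega
  rw [← Finset.sum_fiberwise_of_maps_to hmaps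
    (fun A => (-1:ℝ)^(k*(A ∩ B).card) * (-1:ℝ)^((k+1)*(n-(A ∩ B).card)))]
  have hb : ∀ c ∈ Finset.range (n+1),
      (∑ A ∈ (Finset.univ.filter (fun A : Finset (Fin m) => A.card = n)).filter
          (fun A => (A ∩ B).card = c),
        (-1:ℝ)^(k*(A ∩ B).card) * (-1:ℝ)^((k+1)*(n-(A ∩ B).card)))
      = (k.choose c * (m-k).choose (n-c) : ℝ) *
          ((-1:ℝ)^(k*c) * (-1:ℝ)^((k+1)*(n-c))) := by
    intro c hc
    rw [Finset.mem_range] at hc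
    have hconst : ∀ A ∈ (Finset.univ.filter
          (fun A : Finset (Fin m) => A.card = n)).filter
          (fun A => (A ∩ B).card = c),
        (-1:ℝ)^(k*(A ∩ B).card) * (-1:ℝ)^((k+1)*(n-(A ∩ B).card))
          = (-1:ℝ)^(k*c) * (-1:ℝ)^((k+1)*(n-c)) := by
      intro A hA
      rw [Finset.mem_filter] at hA
      rw [hA.2]
    rw [Finset.sum_congr rfl hconst, Finset.sum_const,
      fiber_card B rfl n c (by omega), nsmul_eq_mul]
    push_cast
    ring
  rw [Finset.sum_congr rfl hb]
  -- Step d : match with the Icc sum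
  rw [Finset.mul_sum]
  rw [← Finset.sum_subset (s₁ := Finset.Icc (n + k - m) (min n k))
      (s₂ := Finset.range (n+1)) ?hsub ?hzero]
  · apply Finset.sum_congr rfl
    intro i hi
    rw [Finset.mem_Icc] at hi
    have hin : i ≤ n := le_trans hi.2 (min_le_left _ _)
    obtain ⟨d, rfl⟩ : ∃ d, n = i + d := ⟨n - i, by omega⟩
    have hni : i + d - i = d := by omega
    rw [hni]
    have hs : (-1:ℝ)^(k*i) * (-1:ℝ)^((k+1)*d)
        = (-1:ℝ)^((i+d)*(k+1)) * (-1:ℝ)^i := by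
      rw [← pow_add, ← pow_add,
        show (i+d)*(k+1) + i = (k*i + (k+1)*d) + 2*i from by ring]
      simp [pow_add, pow_mul]
    linear_combination (((k.choose i) : ℝ) * ((m - k).choose d : ℝ)) * hs
  case hsub =>
    intro i hi
    rw [Finset.mem_Icc] at hi
    rw [Finset.mem_range]
    have := min_le_left n k
    omega
  case hzero =>
    intro i hi hni
    have hkm : k ≤ m := by simpa using Finset.card_le_univ B
    rw [Finset.mem_range] at hi
    rw [Finset.mem_Icc, not_and_or] at hni
    rcases hni with h | h
    · push_neg at h
      have : m - k < n - i := by omega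
      rw [Nat.choose_eq_zero_of_lt this]
      push_cast
      ring
    · push_neg at h
      have hki : k < i := by
        rcases min_lt_iff.mp h with h' | h'
        · omega
        · exact h'
      rw [Nat.choose_eq_zero_of_lt hki]
      push_cast
      ring

end Aux8

section Aux9
variable {m : ℕ}

lemma psiK_zero_arg (φ ψ : Fin m → (Fin m → ℝ)) (n : ℕ) : PsiK φ ψ n 0 = 0 := by
  simp [PsiK]

lemma psiK_add (φ ψ : Fin m → (Fin m → ℝ)) (n : ℕ) (x y : Cl m) :
    PsiK φ ψ n (x + y) = PsiK φ ψ n x + PsiK φ ψ n y := by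
  simp [PsiK, mul_add, add_mul, Finset.sum_add_distrib]

lemma psiK_smul (φ ψ : Fin m → (Fin m → ℝ)) (n : ℕ) (r : ℝ) (x : Cl m) :
    PsiK φ ψ n (r • x) = r • PsiK φ ψ n x := by
  simp [PsiK, mul_smul_comm, smul_mul_assoc, Finset.smul_sum]

end Aux9


/-- for a structural set `φ` and a `k`-grade multivector `a`,
`Ψⱼ^{φ,φ}(a) = (-1)^{j(k+1)} Σ_{i=max{0,j+k-m}}^{min{j,k}} C(m-k, j-i) C(k,i) (-1)ⁱ a`.
(In `ℕ`, `j + k - m` is truncated subtraction, which realizes `max {0, j+k-m}`.) -/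
theorem psiK_on_grade {m j k : ℕ} (φ : Fin m → (Fin m → ℝ))
    (hφ : IsStructuralSet φ) (hj : j ≤ m) (hk : k ≤ m)
    (a : Cl m) (ha : a ∈ gradeK m k) :
    PsiK φ φ j a =
      ((-1 : ℝ) ^ (j * (k + 1)) *
        ∑ i ∈ Finset.Icc (j + k - m) (min j k),
          ((m - k).choose (j - i) : ℝ) * (k.choose i : ℝ) * (-1 : ℝ) ^ i) • a := by
  refine Submodule.span_induction ?_ ?_ ?_ ?_ ha
  · rintro x ⟨B, hB, rfl⟩
    rw [psiK_eq_std hφ _ j, psiK_std, scalar_eq B hB j]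
  · rw [psiK_zero_arg, smul_zero]
  · intro x y _ _ hx' hy'
    rw [psiK_add, hx', hy', smul_add]
  · intro r x _ hx'
    rw [psiK_smul, hx', smul_comm]
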